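/- Let f be Riemann integrable over the compact rectangle R = [a,b]×[c,d], let h(t₁,t₂) = ∬_{[a,t₁]×[c,t₂]} f(s₁,s₂) d(s₁,s₂), and let g be bounded and Riemann–Stieltjes integrable with respect to h over R. Then ∬_R g(t₁,t₂) dh(t₁,t₂) = ∬_R g(t₁,t₂) f(t₁,t₂) d(t₁,t₂). -/

import Mathlib

open Set Filter MeasureTheory Real
open scoped Topology ENNReal

noncomputable section

/-- Sum of absolute second-order rectangular increments of `f` over the grid `x`, `y`. -/
def vitaliSum (f : ℝ → ℝ → ℝ) (x y : ℕ → ℝ) (n m : ℕ) : ℝ :=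
  ∑ i ∈ Finset.range n, ∑ j ∈ Finset.range m,
    |f (x (i+1)) (y (j+1)) - f (x i) (y (j+1)) - f (x (i+1)) (y j) + f (x i) (y j)|

/-- Vitali variation of `f` over a set `Q ⊆ ℝ²`: the supremum, over compact rectangles
contained in `Q` and partitions of them, of the sum of absolute rectangular increments. -/
def vitaliVar (f : ℝ → ℝ → ℝ) (Q : Set (ℝ × ℝ)) : ℝ≥0∞ :=
  ⨆ (n : ℕ) (m : ℕ) (x : ℕ → ℝ) (y : ℕ → ℝ)
    (_ : ∀ i < n, x i < x (i+1)) (_ : ∀ j < m, y j < y (j+1))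
    (_ : Set.Icc (x 0) (x n) ×ˢ Set.Icc (y 0) (y m) ⊆ Q),
    ENNReal.ofReal (vitaliSum f x y n m)

/-- Bounded variation in the sense of Vitali over `ℝ²`. -/
def BVV (f : ℝ → ℝ → ℝ) : Prop := vitaliVar f Set.univ < ⊤

/-- Bounded variation in the sense of Hardy over `ℝ²`. -/
def BVH (f : ℝ → ℝ → ℝ) : Prop :=
  BVV f ∧ (∀ y, BoundedVariationOn (fun s => f s y) Set.univ) ∧
    (∀ x, BoundedVariationOn (fun s => f x s) Set.univ)

/-- The space `BV_{||0||}(ℝ²)`: Vitali bounded variation and vanishing as `‖(x,y)‖ → ∞`. -/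
def BVzero (f : ℝ → ℝ → ℝ) : Prop :=
  BVV f ∧ Tendsto (fun p : ℝ × ℝ => f p.1 p.2) (cocompact (ℝ × ℝ)) (𝓝 0)

/-- `x`, `y` form a partition of `[a,b] × [c,d]` with `n`, resp. `m`, subintervals. -/
def IsPartition (x y : ℕ → ℝ) (n m : ℕ) (a b c d : ℝ) : Prop :=
  x 0 = a ∧ x n = b ∧ y 0 = c ∧ y m = d ∧
    (∀ i < n, x i < x (i+1)) ∧ (∀ j < m, y j < y (j+1))

/-- The tags `(ξ i j, η i j)` belong to the corresponding subrectangles. -/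
def Tags (x y : ℕ → ℝ) (ξ η : ℕ → ℕ → ℝ) (n m : ℕ) : Prop :=
  ∀ i < n, ∀ j < m,
    ξ i j ∈ Set.Icc (x i) (x (i+1)) ∧ η i j ∈ Set.Icc (y j) (y (j+1))

/-- Riemann–Stieltjes sum of `g` with respect to `f`. -/
def RSSum (g f : ℝ → ℝ → ℝ) (x y : ℕ → ℝ) (ξ η : ℕ → ℕ → ℝ) (n m : ℕ) : ℝ :=
  ∑ i ∈ Finset.range n, ∑ j ∈ Finset.range m,
    g (ξ i j) (η i j) *
      (f (x (i+1)) (y (j+1)) - f (x i) (y (j+1)) - f (x (i+1)) (y j) + f (x i) (y j))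

/-- `g` is Riemann–Stieltjes integrable with respect to `f` over `[a,b] × [c,d]`,
with integral `A` (mesh measured by the diagonals of the subrectangles). -/
def RSIntegralOn (g f : ℝ → ℝ → ℝ) (a b c d A : ℝ) : Prop :=
  ∀ ε > 0, ∃ δ > 0, ∀ (n m : ℕ) (x y : ℕ → ℝ) (ξ η : ℕ → ℕ → ℝ),
    IsPartition x y n m a b c d → Tags x y ξ η n m →
    (∀ i < n, ∀ j < m, Real.sqrt ((x (i+1) - x i)^2 + (y (j+1) - y j)^2) < δ) →
    |RSSum g f x y ξ η n m - A| < ε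

/-- Improper Riemann–Stieltjes integral of `g` with respect to `f` over `ℝ²`,
as a Pringsheim limit over expanding compact rectangles. -/
def ImproperRS (g f : ℝ → ℝ → ℝ) (A : ℝ) : Prop :=
  ∀ ε > 0, ∃ M : ℝ, ∀ a b c d : ℝ, a ≤ -M → M ≤ b → c ≤ -M → M ≤ d →
    ∃ B : ℝ, RSIntegralOn g f a b c d B ∧ |B - A| < ε

/-- Improper Riemann–Stieltjes integral of a complex-valued `G` with respect to `f`,
defined via real and imaginary parts. -/
def ImproperRSC (G : ℝ → ℝ → ℂ) (f : ℝ → ℝ → ℝ) (A : ℂ) : Prop :=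
  ImproperRS (fun s t => (G s t).re) f A.re ∧ ImproperRS (fun s t => (G s t).im) f A.im

/-- Riemann sum of `f` over a tagged partition. -/
def KHSum (f : ℝ → ℝ → ℝ) (x y : ℕ → ℝ) (ξ η : ℕ → ℕ → ℝ) (n m : ℕ) : ℝ :=
  ∑ i ∈ Finset.range n, ∑ j ∈ Finset.range m,
    f (ξ i j) (η i j) * (x (i+1) - x i) * (y (j+1) - y j)

/-- The tagged partition is `δ`-fine for the gauge `δ`. -/
def KHFine (δ : ℝ × ℝ → ℝ) (x y : ℕ → ℝ) (ξ η : ℕ → ℕ → ℝ) (n m : ℕ) : Prop :=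
  ∀ i < n, ∀ j < m,
    Set.Icc (x i) (x (i+1)) ⊆
      Set.Ioo (ξ i j - δ (ξ i j, η i j)) (ξ i j + δ (ξ i j, η i j)) ∧
    Set.Icc (y j) (y (j+1)) ⊆
      Set.Ioo (η i j - δ (ξ i j, η i j)) (η i j + δ (ξ i j, η i j))

/-- `f` is Kurzweil–Henstock integrable over `[a,b] × [c,d]` with integral `A`. -/
def KHIntegralOn (f : ℝ → ℝ → ℝ) (a b c d A : ℝ) : Prop :=
  ∀ ε > 0, ∃ δ : ℝ × ℝ → ℝ, (∀ p, 0 < δ p) ∧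
    ∀ (n m : ℕ) (x y : ℕ → ℝ) (ξ η : ℕ → ℕ → ℝ),
      IsPartition x y n m a b c d → Tags x y ξ η n m → KHFine δ x y ξ η n m →
      |KHSum f x y ξ η n m - A| < ε

/-- Kurzweil–Henstock integrability of a complex-valued function, via components. -/
def KHIntegralOnC (f : ℝ → ℝ → ℂ) (a b c d : ℝ) (A : ℂ) : Prop :=
  KHIntegralOn (fun s t => (f s t).re) a b c d A.re ∧
  KHIntegralOn (fun s t => (f s t).im) a b c d A.im

/-- Pringsheim limit, over expanding compact rectangles, of Kurzweil–Henstock integrals. -/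
def HasKHPringsheim (f : ℝ → ℝ → ℝ) (A : ℝ) : Prop :=
  ∀ ε > 0, ∃ M : ℝ, ∀ a b c d : ℝ, a ≤ -M → M ≤ b → c ≤ -M → M ≤ d →
    ∃ B : ℝ, KHIntegralOn f a b c d B ∧ |B - A| < ε

/-- Complex-valued Pringsheim limit of Kurzweil–Henstock integrals. -/
def HasKHPringsheimC (f : ℝ → ℝ → ℂ) (A : ℂ) : Prop :=
  ∀ ε > 0, ∃ M : ℝ, ∀ a b c d : ℝ, a ≤ -M → M ≤ b → c ≤ -M → M ≤ d →
    ∃ B : ℂ, KHIntegralOnC f a b c d B ∧ ‖B - A‖ < ε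

/-- The kernel `e^{-i(ξ t₁ + η t₂)}`. -/
def fourierKernel (ξ η t₁ t₂ : ℝ) : ℂ :=
  Complex.exp (-Complex.I * ((ξ * t₁ + η * t₂ : ℝ) : ℂ))

/-- `A` is the KP-Fourier transform of `f` at `(ξ, η)`. -/
def HasKPFourier (f : ℝ → ℝ → ℝ) (ξ η : ℝ) (A : ℂ) : Prop :=
  HasKHPringsheimC (fun t₁ t₂ => (f t₁ t₂ : ℂ) * fourierKernel ξ η t₁ t₂) A

/-- The region `{(ξ,η) : α₁ ≤ |ξ| ≤ β₁, α₂ ≤ |η| ≤ β₂}`. -/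
def annulusRect (α₁ β₁ α₂ β₂ : ℝ) : Set (ℝ × ℝ) :=
  {p | α₁ ≤ |p.1| ∧ |p.1| ≤ β₁ ∧ α₂ ≤ |p.2| ∧ |p.2| ≤ β₂}

/-- The kernel `(sin(βt) - sin(αt))/t`, extended by continuity at `t = 0`. -/
def sinKernel (α β t : ℝ) : ℝ :=
  if t = 0 then β - α else (Real.sin (β * t) - Real.sin (α * t)) / t

/-- The kernel `h_{α,β}(t) = (sin(βt) - sin(αt))/(πt)`, extended by continuity at `t = 0`. -/
def sinKernelPi (α β t : ℝ) : ℝ :=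
  if t = 0 then (β - α) / π else (Real.sin (β * t) - Real.sin (α * t)) / (π * t)

/-- `g_{(x,y)}(t₁,t₂) = f(x−t₁,y−t₂) + f(x−t₁,y+t₂) + f(x+t₁,y−t₂) + f(x+t₁,y+t₂)`. -/
def quadSum (f : ℝ → ℝ → ℝ) (x y t₁ t₂ : ℝ) : ℝ :=
  f (x - t₁) (y - t₂) + f (x - t₁) (y + t₂) + f (x + t₁) (y - t₂) + f (x + t₁) (y + t₂)

lemma grid_mono (x : ℕ → ℝ) (n : ℕ) (hx : ∀ i < n, x i < x (i+1)) :
    ∀ i j, i ≤ j → j ≤ n → x i ≤ x j := by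
  intro i j hij hjn
  induction j with
  | zero => simp [Nat.le_zero.mp hij]
  | succ k ih =>
    rcases Nat.eq_or_lt_of_le hij with hh | hh
    · rw [hh]
    · exact le_trans (ih (Nat.lt_succ_iff.mp hh) (by omega)) (le_of_lt (hx k (by omega)))

noncomputable def unifP (r s : ℝ) (k : ℕ) (i : ℕ) : ℝ := r + i * ((s - r) / k)

lemma unifP_zero (r s : ℝ) (k : ℕ) : unifP r s k 0 = r := by simp [unifP]
lemma unifP_last (r s : ℝ) (k : ℕ) (hk : k ≠ 0) : unifP r s k k = s := by
  have hk' : (k:ℝ) ≠ 0 := Nat.cast_ne_zero.mpr hk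
  simp only [unifP]; rw [mul_div_assoc', mul_div_cancel_left₀ _ hk']; ring
lemma unifP_step (r s : ℝ) (k : ℕ) (i : ℕ) :
    unifP r s k (i+1) - unifP r s k i = (s - r) / k := by
  simp only [unifP]; push_cast; ring

lemma exists_grid (a p p' γ : ℝ) (hap : a ≤ p) (hpp : p < p') (hγ : 0 < γ) :
    ∃ K N : ℕ, ∃ u : ℕ → ℝ, K ≤ N ∧ u 0 = a ∧ u K = p ∧ u N = p' ∧
      (∀ i < N, u i < u (i+1)) ∧ (∀ i < N, u (i+1) - u i < γ) := by
  have hstep : ∀ r s : ℝ, r < s → ∃ k : ℕ, k ≠ 0 ∧ 0 < (s - r)/k ∧ (s - r)/k < γ := by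
    intro r s hrs
    refine ⟨⌈(s - r)/γ⌉₊ + 1, by omega, ?_, ?_⟩
    · apply div_pos (by linarith)
      exact_mod_cast Nat.succ_pos _
    · rw [div_lt_iff₀ (by exact_mod_cast Nat.succ_pos _)]
      calc s - r ≤ γ * ⌈(s - r)/γ⌉₊ := by
            rw [mul_comm, ← div_le_iff₀ hγ]; exact Nat.le_ceil _
        _ < γ * (⌈(s - r)/γ⌉₊ + 1 : ℕ) := by
            push_cast; nlinarith [Nat.cast_nonneg (α := ℝ) ⌈(s - r)/γ⌉₊]
  obtain ⟨k2, hk2, hk2p, hk2γ⟩ := hstep p p' hpp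
  rcases eq_or_lt_of_le hap with heq | hap'
  · refine ⟨0, k2, unifP p p' k2, Nat.zero_le _, by rw [unifP_zero, heq], unifP_zero _ _ _,
      unifP_last _ _ _ hk2, ?_, ?_⟩
    · intro i _; nlinarith [unifP_step p p' k2 i]
    · intro i _; rw [unifP_step]; exact hk2γ
  · obtain ⟨k1, hk1, hk1p, hk1γ⟩ := hstep a p hap'
    have hlast : unifP a p k1 k1 = p := unifP_last a p k1 hk1
    refine ⟨k1, k1 + k2, fun i => if i < k1 then unifP a p k1 i else unifP p p' k2 (i - k1),
      Nat.le_add_right _ _, ?_, ?_, ?_, ?_, ?_⟩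
    · simp [Nat.pos_of_ne_zero hk1, unifP_zero]
    · simp [unifP_zero]
    · have : ¬ (k1 + k2 < k1) := by omega
      simp [this, unifP_last p p' k2 hk2]
    · intro i hi
      by_cases h1 : i + 1 < k1
      · have h2 : i < k1 := by omega
        simp only [h1, h2, if_true]
        nlinarith [unifP_step a p k1 i]
      · by_cases h2 : i < k1
        · have h3 : i + 1 = k1 := by omega
          simp only [h1, h2, if_true, if_false, h3, Nat.sub_self, unifP_zero,
            lt_self_iff_false]
          have h5 : unifP a p k1 (i+1) = p := by rw [h3, hlast]
          nlinarith [unifP_step a p k1 i]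
        · have h3 : ¬ (i + 1 < k1) := by omega
          simp only [h2, h3, if_false]
          have h4 : i + 1 - k1 = (i - k1) + 1 := by omega
          rw [h4]
          nlinarith [unifP_step p p' k2 (i - k1)]
    · intro i hi
      by_cases h1 : i + 1 < k1
      · have h2 : i < k1 := by omega
        simp only [h1, h2, if_true]
        rw [show unifP a p k1 (i+1) - unifP a p k1 i = (p - a)/k1 from unifP_step a p k1 i]
        exact hk1γ
      · by_cases h2 : i < k1
        · have h3 : i + 1 = k1 := by omega
          simp only [h1, h2, if_true, if_false, h3, Nat.sub_self, unifP_zero,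
            lt_self_iff_false]
          have h5 : unifP a p k1 (i+1) = p := by rw [h3, hlast]
          nlinarith [unifP_step a p k1 i]
        · have h3 : ¬ (i + 1 < k1) := by omega
          simp only [h2, h3, if_false]
          have h4 : i + 1 - k1 = (i - k1) + 1 := by omega
          rw [h4, unifP_step]; exact hk2γ

lemma sqrt_small {s t γ : ℝ} (hs : 0 ≤ s) (ht : 0 ≤ t) (hsγ : s < γ/2) (htγ : t < γ/2) :
    Real.sqrt (s^2 + t^2) < γ := by
  have h1 : Real.sqrt (s^2 + t^2) ≤ s + t := by
    rw [show s + t = Real.sqrt ((s+t)^2) by rw [Real.sqrt_sq (by positivity)]]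
    apply Real.sqrt_le_sqrt; nlinarith
  linarith

lemma sum_Ico_tele (u : ℕ → ℝ) (K N : ℕ) (hKN : K ≤ N) :
    ∑ i ∈ Finset.Ico K N, (u (i+1) - u i) = u N - u K := by
  rw [Finset.sum_Ico_eq_sub _ hKN, Finset.sum_range_sub, Finset.sum_range_sub]
  ring

lemma sum_grid_split (t : ℕ → ℕ → ℝ) (K N L M : ℕ) (hKN : K ≤ N) (hLM : L ≤ M) :
    (∑ i ∈ Finset.range N, ∑ j ∈ Finset.range M, t i j)
      - (∑ i ∈ Finset.range K, ∑ j ∈ Finset.range M, t i j)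
      - (∑ i ∈ Finset.range N, ∑ j ∈ Finset.range L, t i j)
      + (∑ i ∈ Finset.range K, ∑ j ∈ Finset.range L, t i j)
    = ∑ i ∈ Finset.Ico K N, ∑ j ∈ Finset.Ico L M, t i j := by
  have e1 : ∀ P : ℕ → ℝ, ∑ i ∈ Finset.range N, P i
      = ∑ i ∈ Finset.range K, P i + ∑ i ∈ Finset.Ico K N, P i := by
    intro P
    rw [Finset.range_eq_Ico, Finset.range_eq_Ico]
    exact (Finset.sum_Ico_consecutive P (Nat.zero_le K) hKN).symm
  have e2 : ∀ i, ∑ j ∈ Finset.range M, t i j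
      = ∑ j ∈ Finset.range L, t i j + ∑ j ∈ Finset.Ico L M, t i j := by
    intro i
    rw [Finset.range_eq_Ico, Finset.range_eq_Ico]
    exact (Finset.sum_Ico_consecutive (fun j => t i j) (Nat.zero_le L) hLM).symm
  rw [e1 (fun i => ∑ j ∈ Finset.range M, t i j),
    e1 (fun i => ∑ j ∈ Finset.range L, t i j)]
  simp only [e2, Finset.sum_add_distrib]
  ring

lemma exists_le_avg {K N L M : ℕ} (hKN : K < N) (hLM : L < M) (w F : ℕ → ℕ → ℝ)
    (hw : ∀ i ∈ Finset.Ico K N, ∀ j ∈ Finset.Ico L M, 0 < w i j) :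
    ∃ i ∈ Finset.Ico K N, ∃ j ∈ Finset.Ico L M,
      F i j * (∑ i ∈ Finset.Ico K N, ∑ j ∈ Finset.Ico L M, w i j) ≤
        ∑ i ∈ Finset.Ico K N, ∑ j ∈ Finset.Ico L M, F i j * w i j := by
  by_contra hcon
  push_neg at hcon
  set W := ∑ i ∈ Finset.Ico K N, ∑ j ∈ Finset.Ico L M, w i j with hW
  set S := ∑ i ∈ Finset.Ico K N, ∑ j ∈ Finset.Ico L M, F i j * w i j with hS
  have hne : ((Finset.Ico K N) ×ˢ (Finset.Ico L M)).Nonempty :=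
    ⟨(K, L), by simp [Finset.mem_product, hKN, hLM]⟩
  have key : S * W < W * S := by
    calc S * W = ∑ p ∈ (Finset.Ico K N) ×ˢ (Finset.Ico L M), S * w p.1 p.2 := by
          rw [hW, Finset.sum_product, Finset.mul_sum]
          exact Finset.sum_congr rfl fun i _ => by rw [Finset.mul_sum]
      _ < ∑ p ∈ (Finset.Ico K N) ×ˢ (Finset.Ico L M), (F p.1 p.2 * W) * w p.1 p.2 := by
          apply Finset.sum_lt_sum_of_nonempty hne
          intro p hp
          rw [Finset.mem_product] at hp
          exact mul_lt_mul_of_pos_right (hcon p.1 hp.1 p.2 hp.2) (hw p.1 hp.1 p.2 hp.2)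
      _ = W * S := by
          rw [hS, Finset.sum_product, Finset.mul_sum]
          apply Finset.sum_congr rfl
          intro i _
          rw [Finset.mul_sum]
          apply Finset.sum_congr rfl
          intro j _
          ring
  nlinarith [key]

lemma cellApprox (a b c d : ℝ) (f h : ℝ → ℝ → ℝ)
    (hf : ∀ t₁ ∈ Set.Icc a b, ∀ t₂ ∈ Set.Icc c d,
      RSIntegralOn f (fun s t => s * t) a t₁ c t₂ (h t₁ t₂))
    (p p' q q' : ℝ) (hap : a ≤ p) (hpp : p < p') (hp'b : p' ≤ b)
    (hcq : c ≤ q) (hqq : q < q') (hq'd : q' ≤ d)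
    (ξ η : ℝ) (θ : ℝ) (hθ : 0 < θ) :
    ∃ ξ' ∈ Set.Icc p p', ∃ η' ∈ Set.Icc q q', ∃ σ : ℝ, (σ = 1 ∨ σ = -1) ∧
      |f ξ η * ((p' - p) * (q' - q)) - (h p' q' - h p q' - h p' q + h p q)|
        ≤ σ * (f ξ η - f ξ' η') * ((p' - p) * (q' - q)) + θ := by
  have hpmem : p ∈ Set.Icc a b := ⟨hap, le_trans hpp.le hp'b⟩
  have hp'mem : p' ∈ Set.Icc a b := ⟨le_trans hap hpp.le, hp'b⟩
  have hqmem : q ∈ Set.Icc c d := ⟨hcq, le_trans hqq.le hq'd⟩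
  have hq'mem : q' ∈ Set.Icc c d := ⟨le_trans hcq hqq.le, hq'd⟩
  obtain ⟨δ1, hδ1, H1⟩ := hf p' hp'mem q' hq'mem (θ/4) (by positivity)
  obtain ⟨δ2, hδ2, H2⟩ := hf p hpmem q' hq'mem (θ/4) (by positivity)
  obtain ⟨δ3, hδ3, H3⟩ := hf p' hp'mem q hqmem (θ/4) (by positivity)
  obtain ⟨δ4, hδ4, H4⟩ := hf p hpmem q hqmem (θ/4) (by positivity)
  set γ := min (min δ1 δ2) (min δ3 δ4) with hγdef
  have hγ : 0 < γ := by
    simp only [hγdef, lt_min_iff]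
    exact ⟨⟨hδ1, hδ2⟩, ⟨hδ3, hδ4⟩⟩
  obtain ⟨K, N, u, hKN, hu0, huK, huN, humono, hustep⟩ :=
    exists_grid a p p' (γ/2) hap hpp (by positivity)
  obtain ⟨L, M, v, hLM, hv0, hvL, hvM, hvmono, hvstep⟩ :=
    exists_grid c q q' (γ/2) hcq hqq (by positivity)
  set ξt : ℕ → ℕ → ℝ := fun i _ => u i with hξt
  set ηt : ℕ → ℕ → ℝ := fun _ j => v j with hηt
  -- fineness
  have hfine : ∀ n' m', n' ≤ N → m' ≤ M → ∀ i < n', ∀ j < m',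
      Real.sqrt ((u (i+1) - u i)^2 + (v (j+1) - v j)^2) < γ := by
    intro n' m' hn' hm' i hi j hj
    exact sqrt_small (by nlinarith [humono i (by omega)]) (by nlinarith [hvmono j (by omega)])
      (hustep i (by omega)) (hvstep j (by omega))
  have htags : ∀ n' m', n' ≤ N → m' ≤ M → Tags u v ξt ηt n' m' := by
    intro n' m' hn' hm' i hi j hj
    exact ⟨⟨le_refl _, (humono i (by omega)).le⟩, ⟨le_refl _, (hvmono j (by omega)).le⟩⟩
  -- the four Riemann sums
  have hsum1 : |RSSum f (fun s t => s * t) u v ξt ηt N M - h p' q'| < θ/4 := by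
    apply H1 N M u v ξt ηt ⟨hu0, huN, hv0, hvM, humono, hvmono⟩
      (htags N M le_rfl le_rfl)
    intro i hi j hj
    exact lt_of_lt_of_le (hfine N M le_rfl le_rfl i hi j hj)
      (le_trans (min_le_left _ _) (min_le_left _ _))
  have hsum2 : |RSSum f (fun s t => s * t) u v ξt ηt K M - h p q'| < θ/4 := by
    apply H2 K M u v ξt ηt ⟨hu0, huK, hv0, hvM, fun i hi => humono i (by omega), hvmono⟩
      (htags K M hKN le_rfl)
    intro i hi j hj
    exact lt_of_lt_of_le (hfine K M hKN le_rfl i hi j hj)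
      (le_trans (min_le_left _ _) (min_le_right _ _))
  have hsum3 : |RSSum f (fun s t => s * t) u v ξt ηt N L - h p' q| < θ/4 := by
    apply H3 N L u v ξt ηt ⟨hu0, huN, hv0, hvL, humono, fun j hj => hvmono j (by omega)⟩
      (htags N L le_rfl hLM)
    intro i hi j hj
    exact lt_of_lt_of_le (hfine N L le_rfl hLM i hi j hj)
      (le_trans (min_le_right _ _) (min_le_left _ _))
  have hsum4 : |RSSum f (fun s t => s * t) u v ξt ηt K L - h p q| < θ/4 := by
    apply H4 K L u v ξt ηt ⟨hu0, huK, hv0, hvL, fun i hi => humono i (by omega),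
      fun j hj => hvmono j (by omega)⟩ (htags K L hKN hLM)
    intro i hi j hj
    exact lt_of_lt_of_le (hfine K L hKN hLM i hi j hj)
      (le_trans (min_le_right _ _) (min_le_right _ _))
  -- combine via grid split
  set t : ℕ → ℕ → ℝ := fun i j => f (u i) (v j) *
    (u (i+1) * v (j+1) - u i * v (j+1) - u (i+1) * v j + u i * v j) with ht
  have hRS : ∀ P Q : ℕ, RSSum f (fun s t => s * t) u v ξt ηt P Q
      = ∑ i ∈ Finset.range P, ∑ j ∈ Finset.range Q, t i j := by
    intro P Q; rfl
  set S := ∑ i ∈ Finset.Ico K N, ∑ j ∈ Finset.Ico L M, t i j with hSdef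
  set Δ := h p' q' - h p q' - h p' q + h p q with hΔ
  have hSΔ : |S - Δ| < θ := by
    have hsplit := sum_grid_split t K N L M hKN hLM
    rw [← hRS, ← hRS, ← hRS, ← hRS] at hsplit
    have e1 := abs_lt.mp hsum1
    have e2 := abs_lt.mp hsum2
    have e3 := abs_lt.mp hsum3
    have e4 := abs_lt.mp hsum4
    rw [abs_lt]
    constructor <;> linarith [hsplit]
  -- weights
  set w : ℕ → ℕ → ℝ := fun i j =>
    u (i+1) * v (j+1) - u i * v (j+1) - u (i+1) * v j + u i * v j with hw
  have hweq : ∀ i j, w i j = (u (i+1) - u i) * (v (j+1) - v j) := by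
    intro i j; simp only [hw]; ring
  have hKN' : K < N := by
    rcases eq_or_lt_of_le hKN with hh | hh
    · exfalso; rw [hh, huN] at huK; linarith
    · exact hh
  have hLM' : L < M := by
    rcases eq_or_lt_of_le hLM with hh | hh
    · exfalso; rw [hh, hvM] at hvL; linarith
    · exact hh
  have hwpos : ∀ i ∈ Finset.Ico K N, ∀ j ∈ Finset.Ico L M, 0 < w i j := by
    intro i hi j hj
    rw [Finset.mem_Ico] at hi hj
    rw [hweq]
    have := humono i hi.2
    have := hvmono j hj.2
    nlinarith
  have hWsum : ∑ i ∈ Finset.Ico K N, ∑ j ∈ Finset.Ico L M, w i j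
      = (p' - p) * (q' - q) := by
    calc ∑ i ∈ Finset.Ico K N, ∑ j ∈ Finset.Ico L M, w i j
        = ∑ i ∈ Finset.Ico K N, (u (i+1) - u i) * ∑ j ∈ Finset.Ico L M, (v (j+1) - v j) := by
          apply Finset.sum_congr rfl; intro i _
          rw [Finset.mul_sum]
          apply Finset.sum_congr rfl; intro j _
          rw [hweq]
      _ = (u N - u K) * (v M - v L) := by
          rw [sum_Ico_tele v L M hLM, ← Finset.sum_mul, sum_Ico_tele u K N hKN]
      _ = (p' - p) * (q' - q) := by rw [huK, huN, hvL, hvM]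
  have humem : ∀ i, K ≤ i → i ≤ N → u i ∈ Set.Icc p p' := by
    intro i h1 h2
    exact ⟨huK ▸ grid_mono u N humono K i h1 h2, huN ▸ grid_mono u N humono i N h2 le_rfl⟩
  have hvmem : ∀ j, L ≤ j → j ≤ M → v j ∈ Set.Icc q q' := by
    intro j h1 h2
    exact ⟨hvL ▸ grid_mono v M hvmono L j h1 h2, hvM ▸ grid_mono v M hvmono j M h2 le_rfl⟩
  have hSe : ∑ i ∈ Finset.Ico K N, ∑ j ∈ Finset.Ico L M, f (u i) (v j) * w i j = S := by
    apply Finset.sum_congr rfl; intro i _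
    apply Finset.sum_congr rfl; intro j _
    rfl
  clear_value γ ξt ηt t S Δ w
  clear hRS ht hw hγdef hξt hηt hSdef
  by_cases hcase : Δ ≤ f ξ η * ((p' - p) * (q' - q))
  · obtain ⟨i0, hi0, j0, hj0, havg⟩ :=
      exists_le_avg hKN' hLM' w (fun i j => f (u i) (v j)) hwpos
    rw [Finset.mem_Ico] at hi0 hj0
    refine ⟨u i0, humem i0 hi0.1 (by omega), v j0, hvmem j0 hj0.1 (by omega), 1,
      Or.inl rfl, ?_⟩
    simp only [hWsum] at havg
    rw [show (∑ i ∈ Finset.Ico K N, ∑ j ∈ Finset.Ico L M,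
      (fun i j => f (u i) (v j)) i j * w i j) = S from hSe] at havg
    have habs := abs_lt.mp hSΔ
    rw [abs_of_nonneg (by linarith)]
    ring_nf
    ring_nf at havg habs hcase ⊢
    linarith [havg, habs.1, habs.2, hcase]
  · push_neg at hcase
    obtain ⟨i0, hi0, j0, hj0, havg⟩ :=
      exists_le_avg hKN' hLM' w (fun i j => - f (u i) (v j)) hwpos
    rw [Finset.mem_Ico] at hi0 hj0
    refine ⟨u i0, humem i0 hi0.1 (by omega), v j0, hvmem j0 hj0.1 (by omega), -1,
      Or.inr rfl, ?_⟩
    simp only [hWsum] at havg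
    have hSe2 : ∑ i ∈ Finset.Ico K N, ∑ j ∈ Finset.Ico L M,
        (fun i j => - f (u i) (v j)) i j * w i j = -S := by
      rw [← hSe, ← Finset.sum_neg_distrib]
      apply Finset.sum_congr rfl; intro i _
      rw [← Finset.sum_neg_distrib]
      apply Finset.sum_congr rfl; intro j _
      ring
    rw [hSe2] at havg
    have habs := abs_lt.mp hSΔ
    rw [abs_of_nonpos (by linarith)]
    ring_nf at havg habs hcase ⊢
    linarith [havg, habs.1, habs.2, hcase]

lemma arith1 (C ε : ℝ) (hC0 : 0 ≤ C) (hε : 0 < ε) :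
    C * (ε / (8 * (C + 1))) ≤ ε / 8 := by
  rw [show C * (ε / (8 * (C + 1))) = C * ε / (8 * (C + 1)) by ring,
    div_le_div_iff₀ (by positivity) (by norm_num : (0:ℝ) < 8)]
  nlinarith

lemma arith2 (C P ε : ℝ) (hC0 : 0 ≤ C) (hP : 0 ≤ P) (hε : 0 < ε) :
    P * (C * (ε / (8 * (C + 1) * (P + 1)))) ≤ ε / 8 := by
  have hkey2 : P * C ≤ (C + 1) * (P + 1) := by nlinarith
  rw [show P * (C * (ε / (8 * (C + 1) * (P + 1))))
      = P * C * ε / (8 * (C + 1) * (P + 1)) by ring,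
    div_le_div_iff₀ (by positivity) (by norm_num : (0:ℝ) < 8)]
  nlinarith [mul_le_mul_of_nonneg_right hkey2 (le_of_lt hε)]

/-- Lemma: if `f` is Riemann integrable over `R = [a,b]×[c,d]`,
`h(t₁,t₂) = ∬_{[a,t₁]×[c,t₂]} f` (Riemann integral), and `g` is bounded and
Riemann–Stieltjes integrable with respect to `h` over `R`, then
`∬_R g dh = ∬_R g·f` (the latter a Riemann integral, i.e. a Riemann–Stieltjes integral
with respect to `(s,t) ↦ s·t`). -/
theorem stmt12 (a b c d : ℝ) (hab : a < b) (hcd : c < d)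
    (f g h : ℝ → ℝ → ℝ)
    (hf : ∀ t₁ ∈ Set.Icc a b, ∀ t₂ ∈ Set.Icc c d,
      RSIntegralOn f (fun s t => s * t) a t₁ c t₂ (h t₁ t₂))
    (hgb : ∃ C : ℝ, ∀ s t : ℝ, |g s t| ≤ C) :
    ∀ A : ℝ, RSIntegralOn g h a b c d A →
      RSIntegralOn (fun s t => g s t * f s t) (fun s t => s * t) a b c d A := by
  intro A hA ε hε
  obtain ⟨C, hC⟩ := hgb
  have hC0 : 0 ≤ C := le_trans (abs_nonneg _) (hC 0 0)
  have hC1 : (0:ℝ) < C + 1 := by linarith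
  set ε'' := ε / (8 * (C + 1)) with hε''def
  have hε'' : 0 < ε'' := by positivity
  obtain ⟨δ1, hδ1, H1⟩ := hA (ε/2) (by positivity)
  obtain ⟨δ2, hδ2, H2⟩ := hf b ⟨le_of_lt hab, le_refl b⟩ d ⟨le_of_lt hcd, le_refl d⟩ ε'' hε''
  refine ⟨min δ1 δ2, lt_min hδ1 hδ2, ?_⟩
  intro n m x y ξ η hP hT hfine
  obtain ⟨hx0, hxn, hy0, hym, hxmono, hymono⟩ := hP
  have hxmem : ∀ i ≤ n, x i ∈ Set.Icc a b := fun i hi =>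
    ⟨hx0 ▸ grid_mono x n hxmono 0 i (Nat.zero_le i) hi,
     hxn ▸ grid_mono x n hxmono i n hi le_rfl⟩
  have hymem : ∀ j ≤ m, y j ∈ Set.Icc c d := fun j hj =>
    ⟨hy0 ▸ grid_mono y m hymono 0 j (Nat.zero_le j) hj,
     hym ▸ grid_mono y m hymono j m hj le_rfl⟩
  set θ := ε / (8 * (C + 1) * (n * m + 1)) with hθdef
  have hθ : 0 < θ := by positivity
  have key : ∀ i j : ℕ, ∃ ξ' η' σ : ℝ, i < n → j < m →
      (ξ' ∈ Set.Icc (x i) (x (i+1)) ∧ η' ∈ Set.Icc (y j) (y (j+1)) ∧ (σ = 1 ∨ σ = -1) ∧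
        |f (ξ i j) (η i j) * ((x (i+1) - x i) * (y (j+1) - y j)) -
          (h (x (i+1)) (y (j+1)) - h (x i) (y (j+1)) - h (x (i+1)) (y j) + h (x i) (y j))|
          ≤ σ * (f (ξ i j) (η i j) - f ξ' η') * ((x (i+1) - x i) * (y (j+1) - y j)) + θ) := by
    intro i j
    by_cases hij : i < n ∧ j < m
    · obtain ⟨ξ', hξ', η', hη', σ, hσ, hineq⟩ :=
        cellApprox a b c d f h hf (x i) (x (i+1)) (y j) (y (j+1))
          (hxmem i (by omega)).1 (hxmono i hij.1) (hxmem (i+1) (by omega)).2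
          (hymem j (by omega)).1 (hymono j hij.2) (hymem (j+1) (by omega)).2
          (ξ i j) (η i j) θ hθ
      exact ⟨ξ', η', σ, fun _ _ => ⟨hξ', hη', hσ, hineq⟩⟩
    · exact ⟨0, 0, 1, fun hh1 hh2 => absurd ⟨hh1, hh2⟩ hij⟩
  choose ξ' η' σ hkey using key
  set ξ1 : ℕ → ℕ → ℝ := fun i j => if σ i j = 1 then ξ i j else ξ' i j with hξ1
  set η1 : ℕ → ℕ → ℝ := fun i j => if σ i j = 1 then η i j else η' i j with hη1
  set ξ2 : ℕ → ℕ → ℝ := fun i j => if σ i j = 1 then ξ' i j else ξ i j with hξ2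
  set η2 : ℕ → ℕ → ℝ := fun i j => if σ i j = 1 then η' i j else η i j with hη2
  have hT1 : Tags x y ξ1 η1 n m := by
    intro i hi j hj
    by_cases hσ : σ i j = 1
    · simp only [hξ1, hη1, hσ, if_true]
      exact hT i hi j hj
    · simp only [hξ1, hη1, hσ, if_false]
      exact ⟨(hkey i j hi hj).1, (hkey i j hi hj).2.1⟩
  have hT2 : Tags x y ξ2 η2 n m := by
    intro i hi j hj
    by_cases hσ : σ i j = 1
    · simp only [hξ2, hη2, hσ, if_true]
      exact ⟨(hkey i j hi hj).1, (hkey i j hi hj).2.1⟩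
    · simp only [hξ2, hη2, hσ, if_false]
      exact hT i hi j hj
  have hPart : IsPartition x y n m a b c d := ⟨hx0, hxn, hy0, hym, hxmono, hymono⟩
  have hfine1 : ∀ i < n, ∀ j < m,
      Real.sqrt ((x (i+1) - x i)^2 + (y (j+1) - y j)^2) < δ1 :=
    fun i hi j hj => lt_of_lt_of_le (hfine i hi j hj) (min_le_left _ _)
  have hfine2 : ∀ i < n, ∀ j < m,
      Real.sqrt ((x (i+1) - x i)^2 + (y (j+1) - y j)^2) < δ2 :=
    fun i hi j hj => lt_of_lt_of_le (hfine i hi j hj) (min_le_right _ _)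
  have hg : |RSSum g h x y ξ η n m - A| < ε/2 := H1 n m x y ξ η hPart hT hfine1
  have hS1 : |RSSum f (fun s t => s * t) x y ξ1 η1 n m - h b d| < ε'' :=
    H2 n m x y ξ1 η1 hPart hT1 hfine2
  have hS2 : |RSSum f (fun s t => s * t) x y ξ2 η2 n m - h b d| < ε'' :=
    H2 n m x y ξ2 η2 hPart hT2 hfine2
  -- the error sum
  set e : ℕ → ℕ → ℝ := fun i j => g (ξ i j) (η i j) *
    (f (ξ i j) (η i j) * ((x (i+1) - x i) * (y (j+1) - y j)) -
      (h (x (i+1)) (y (j+1)) - h (x i) (y (j+1)) - h (x (i+1)) (y j) + h (x i) (y j)))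
    with he
  clear_value ε'' θ ξ1 η1 ξ2 η2 e
  have hE : RSSum (fun s t => g s t * f s t) (fun s t => s * t) x y ξ η n m
      - RSSum g h x y ξ η n m
      = ∑ i ∈ Finset.range n, ∑ j ∈ Finset.range m, e i j := by
    simp only [RSSum, ← Finset.sum_sub_distrib]
    apply Finset.sum_congr rfl; intro i _
    apply Finset.sum_congr rfl; intro j _
    simp only [he]; ring
  have hcell : ∀ i ∈ Finset.range n, ∀ j ∈ Finset.range m,
      |e i j| ≤ (C * (f (ξ1 i j) (η1 i j) *
          ((x (i+1)) * (y (j+1)) - x i * (y (j+1)) - (x (i+1)) * (y j) + x i * (y j)))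
        - C * (f (ξ2 i j) (η2 i j) *
          ((x (i+1)) * (y (j+1)) - x i * (y (j+1)) - (x (i+1)) * (y j) + x i * (y j))))
        + C * θ := by
    intro i hi j hj
    rw [Finset.mem_range] at hi hj
    obtain ⟨hm1, hm2, hσ, hineq⟩ := hkey i j hi hj
    have hid : σ i j * (f (ξ i j) (η i j) - f (ξ' i j) (η' i j)) *
        ((x (i+1) - x i) * (y (j+1) - y j))
        = (f (ξ1 i j) (η1 i j) - f (ξ2 i j) (η2 i j)) *
          ((x (i+1) - x i) * (y (j+1) - y j)) := by
      rcases hσ with hσ | hσ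
      · simp only [hξ1, hη1, hξ2, hη2, hσ, if_true]; ring
      · have hne : σ i j ≠ 1 := by rw [hσ]; norm_num
        simp only [hξ1, hη1, hξ2, hη2, if_neg hne, hσ]; ring
    rw [hid] at hineq
    calc |e i j| = |g (ξ i j) (η i j)| *
        |f (ξ i j) (η i j) * ((x (i+1) - x i) * (y (j+1) - y j)) -
          (h (x (i+1)) (y (j+1)) - h (x i) (y (j+1)) - h (x (i+1)) (y j) + h (x i) (y j))| := by
          rw [he, abs_mul]
      _ ≤ C * ((f (ξ1 i j) (η1 i j) - f (ξ2 i j) (η2 i j)) *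
          ((x (i+1) - x i) * (y (j+1) - y j)) + θ) := by
          apply mul_le_mul (hC _ _) hineq (abs_nonneg _) hC0
      _ = (C * (f (ξ1 i j) (η1 i j) *
          ((x (i+1)) * (y (j+1)) - x i * (y (j+1)) - (x (i+1)) * (y j) + x i * (y j)))
        - C * (f (ξ2 i j) (η2 i j) *
          ((x (i+1)) * (y (j+1)) - x i * (y (j+1)) - (x (i+1)) * (y j) + x i * (y j))))
        + C * θ := by ring
  have hEbound : |∑ i ∈ Finset.range n, ∑ j ∈ Finset.range m, e i j|
      ≤ C * RSSum f (fun s t => s * t) x y ξ1 η1 n m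
        - C * RSSum f (fun s t => s * t) x y ξ2 η2 n m
        + (n * m : ℝ) * (C * θ) := by
    calc |∑ i ∈ Finset.range n, ∑ j ∈ Finset.range m, e i j|
        ≤ ∑ i ∈ Finset.range n, ∑ j ∈ Finset.range m, |e i j| := by
          apply le_trans (Finset.abs_sum_le_sum_abs _ _)
          apply Finset.sum_le_sum
          intro i _
          exact Finset.abs_sum_le_sum_abs _ _
      _ ≤ ∑ i ∈ Finset.range n, ∑ j ∈ Finset.range m,
          ((C * (f (ξ1 i j) (η1 i j) *
            ((x (i+1)) * (y (j+1)) - x i * (y (j+1)) - (x (i+1)) * (y j) + x i * (y j)))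
          - C * (f (ξ2 i j) (η2 i j) *
            ((x (i+1)) * (y (j+1)) - x i * (y (j+1)) - (x (i+1)) * (y j) + x i * (y j))))
          + C * θ) := by
          apply Finset.sum_le_sum; intro i hi
          apply Finset.sum_le_sum; intro j hj
          exact hcell i hi j hj
      _ = C * RSSum f (fun s t => s * t) x y ξ1 η1 n m
          - C * RSSum f (fun s t => s * t) x y ξ2 η2 n m
          + (n * m : ℝ) * (C * θ) := by
          simp only [Finset.sum_add_distrib, Finset.sum_sub_distrib, Finset.sum_const,
            Finset.card_range, nsmul_eq_mul, RSSum, ← Finset.mul_sum]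
          push_cast
          ring
  -- arithmetic
  have habs1 := abs_lt.mp hS1
  have habs2 := abs_lt.mp hS2
  have hgabs := abs_lt.mp hg
  have harith1 : C * ε'' ≤ ε / 8 := by
    rw [hε''def]; exact arith1 C ε hC0 hε
  have harith2 : (n * m : ℝ) * (C * θ) ≤ ε / 8 := by
    rw [hθdef]; exact arith2 C ((n:ℝ) * (m:ℝ)) ε hC0 (by positivity) hε
  have hfinal : |RSSum (fun s t => g s t * f s t) (fun s t => s * t) x y ξ η n m - A|
      ≤ |∑ i ∈ Finset.range n, ∑ j ∈ Finset.range m, e i j|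
        + |RSSum g h x y ξ η n m - A| := by
    rw [← hE, show RSSum (fun s t => g s t * f s t) (fun s t => s * t) x y ξ η n m - A
        = (RSSum (fun s t => g s t * f s t) (fun s t => s * t) x y ξ η n m
            - RSSum g h x y ξ η n m) + (RSSum g h x y ξ η n m - A) by ring]
    exact abs_add_le _ _
  have hT12 : C * RSSum f (fun s t => s * t) x y ξ1 η1 n m
      - C * RSSum f (fun s t => s * t) x y ξ2 η2 n m ≤ C * ε'' + C * ε'' := by
    nlinarith [habs1.1, habs1.2, habs2.1, habs2.2]
  linarith [hfinal, hEbound, hgabs.2]
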